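/- For all r ≥ 1, the integral over y ∈ [-(r-1), r-1] of (1 - α_r(y)) dy is at most 1/(2e²) + 1/(4e⁵), where α_r(y) = ((1 + e^{-2y-2r})(1 + e^{2y-2r}))^{-1/2}. -/

import Mathlib

open Real MeasureTheory

lemma one_sub_rpow_le (w : ℝ) (hw : 1 ≤ w) :
    1 - w ^ (-(1/2) : ℝ) ≤ (w - 1) / 2 := by
  have hw0 : (0:ℝ) ≤ w := by linarith
  have hs : w ^ (-(1/2) : ℝ) = (Real.sqrt w)⁻¹ := by
    rw [Real.rpow_neg hw0, Real.sqrt_eq_rpow]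
  rw [hs]
  set s := Real.sqrt w with hsdef
  have hs1 : 1 ≤ s := by
    rw [hsdef, show (1:ℝ) = Real.sqrt 1 by simp]
    exact Real.sqrt_le_sqrt hw
  have hsq : s ^ 2 = w := Real.sq_sqrt hw0
  have hspos : 0 < s := by linarith
  have hinv : s * s⁻¹ = 1 := mul_inv_cancel₀ (ne_of_gt hspos)
  nlinarith [sq_nonneg (s - 1), mul_pos hspos hspos]

theorem integral_one_sub_alpha_le (r : ℝ) (hr : 1 ≤ r) :
    ∫ y in (-(r - 1))..(r - 1),
        (1 - ((1 + Real.exp (-2 * y - 2 * r)) * (1 + Real.exp (2 * y - 2 * r))) ^ (-(1/2) : ℝ))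
      ≤ 1 / (2 * Real.exp 2) + 1 / (4 * Real.exp 5) := by
  have hle : -(r - 1) ≤ r - 1 := by linarith
  set g : ℝ → ℝ := fun y =>
    (Real.exp (-2 * y - 2 * r) + Real.exp (2 * y - 2 * r) + Real.exp (-(4*r))) / 2 with hg
  have hpt : ∀ y ∈ Set.Icc (-(r-1)) (r-1),
      (1 - ((1 + Real.exp (-2 * y - 2 * r)) * (1 + Real.exp (2 * y - 2 * r))) ^ (-(1/2) : ℝ))
        ≤ g y := by
    intro y _
    have ha := Real.exp_pos (-2 * y - 2 * r)
    have hb := Real.exp_pos (2 * y - 2 * r)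
    have hw : 1 ≤ (1 + Real.exp (-2 * y - 2 * r)) * (1 + Real.exp (2 * y - 2 * r)) := by
      nlinarith
    have h := one_sub_rpow_le _ hw
    have hprod : Real.exp (-2 * y - 2 * r) * Real.exp (2 * y - 2 * r) = Real.exp (-(4*r)) := by
      rw [← Real.exp_add]; ring_nf
    refine h.trans ?_
    rw [hg]
    simp only []
    nlinarith [hprod]
  have hcont1 : Continuous fun y : ℝ =>
      (1 - ((1 + Real.exp (-2 * y - 2 * r)) * (1 + Real.exp (2 * y - 2 * r))) ^ (-(1/2) : ℝ)) := by
    apply Continuous.sub continuous_const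
    apply Continuous.rpow_const
    · fun_prop
    · intro x
      left
      have ha := Real.exp_pos (-2 * x - 2 * r)
      have hb := Real.exp_pos (2 * x - 2 * r)
      positivity
  have hcontg : Continuous g := by rw [hg]; fun_prop
  have hmono := intervalIntegral.integral_mono_on hle
    (hcont1.intervalIntegrable (μ := volume) _ _) (hcontg.intervalIntegrable _ _) hpt
  refine hmono.trans ?_
  -- compute ∫ g
  have hG : ∀ y : ℝ, HasDerivAt (fun y : ℝ =>
      (-Real.exp (-2 * y - 2 * r) / 2 + Real.exp (2 * y - 2 * r) / 2 + y * Real.exp (-(4*r))) / 2)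
      (g y) y := by
    intro y
    have h1 : HasDerivAt (fun y : ℝ => -2 * y - 2 * r) (-2) y := by
      simpa using ((hasDerivAt_id y).const_mul (-2)).sub_const (2*r)
    have h2 : HasDerivAt (fun y : ℝ => 2 * y - 2 * r) (2) y := by
      simpa using ((hasDerivAt_id y).const_mul 2).sub_const (2*r)
    have e1 := h1.exp
    have e2 := h2.exp
    have e3 : HasDerivAt (fun y : ℝ => y * Real.exp (-(4*r))) (Real.exp (-(4*r))) y := by
      simpa using (hasDerivAt_id y).mul_const (Real.exp (-(4*r)))
    have := (((e1.neg.div_const 2).add (e2.div_const 2)).add e3).div_const 2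
    refine this.congr_deriv ?_
    rw [hg]
    ring
  have hint : ∫ y in (-(r - 1))..(r - 1), g y =
      ((-Real.exp (-2 * (r-1) - 2 * r) / 2 + Real.exp (2 * (r-1) - 2 * r) / 2 + (r-1) * Real.exp (-(4*r))) / 2)
      - ((-Real.exp (-2 * (-(r-1)) - 2 * r) / 2 + Real.exp (2 * (-(r-1)) - 2 * r) / 2 + (-(r-1)) * Real.exp (-(4*r))) / 2) := by
    exact intervalIntegral.integral_eq_sub_of_hasDerivAt (fun y _ => hG y)
      (hcontg.intervalIntegrable _ _)
  rw [hint]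
  have h2eq : (2 : ℝ) * (r - 1) - 2 * r = -2 := by ring
  have h2eq' : (-2 : ℝ) * (-(r - 1)) - 2 * r = -2 := by ring
  have h2eq'' : (-2 : ℝ) * (r - 1) - 2 * r = 2 - 4*r := by ring
  have h2eq''' : (2 : ℝ) * (-(r - 1)) - 2 * r = 2 - 4*r := by ring
  rw [h2eq, h2eq', h2eq'', h2eq''']
  -- now: -e^{2-4r}/2 + e^{-2} + 2(r-1)e^{-4r}, all over 2
  have hkey : (r - 1) * Real.exp (-(4*r)) ≤ Real.exp (-5) / 4 := by
    have := Real.add_one_le_exp (4*r - 5)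
    have hmul : Real.exp (4*r - 5) * Real.exp (-(4*r)) = Real.exp (-5) := by
      rw [← Real.exp_add]; ring_nf
    have hepos := Real.exp_pos (-(4*r))
    nlinarith
  have hpos1 := Real.exp_pos (2 - 4*r)
  have he2 : Real.exp (-2) = 1 / Real.exp 2 := by
    rw [Real.exp_neg, inv_eq_one_div]
  have he5 : Real.exp (-5) = 1 / Real.exp 5 := by
    rw [Real.exp_neg, inv_eq_one_div]
  have hex2 := Real.exp_pos (2:ℝ)
  have hex5 := Real.exp_pos (5:ℝ)
  have goal2 : (1:ℝ) / (2 * Real.exp 2) = Real.exp (-2) / 2 := by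
    rw [he2]; ring
  have goal5 : (1:ℝ) / (4 * Real.exp 5) = Real.exp (-5) / 4 := by
    rw [he5]; ring
  rw [goal2, goal5]
  nlinarith [hkey, hpos1]
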